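/- arXiv:0809.0569 — 8 statements merged into one kernel-verified Lean document; each statement's English description precedes it below -/
import Mathlib

section
/- Let σ > 0, V ∈ ℝ, ψ : ℝ → ℝ continuously differentiable and 1-periodic, and suppose ρ̄ : ℝ → ℝ is continuously differentiable, strictly positive, 1-periodic, and satisfies σ ρ̄'(z) + ψ'(z) ρ̄(z) + V ρ̄(z) = I for all z ∈ ℝ, where I ∈ ℝ is a constant. Then V = I · ∫₀¹ ρ̄(z)⁻¹ dz. -/
open MeasureTheory intervalIntegral

/-- Dividing the stationary Fokker–Planck equation by the positive periodic
solution `ρ̄` and integrating over one period yields `V = I ∫₀¹ ρ̄⁻¹`. -/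
theorem stmt1 (σ V I : ℝ) (hσ : 0 < σ) (ψ : ℝ → ℝ)
    (hψ : ContDiff ℝ 1 ψ) (hψper : ∀ x, ψ (x + 1) = ψ x)
    (ρ : ℝ → ℝ) (hρ : ContDiff ℝ 1 ρ) (hρpos : ∀ x, 0 < ρ x)
    (hρper : ∀ x, ρ (x + 1) = ρ x)
    (heq : ∀ z, σ * deriv ρ z + deriv ψ z * ρ z + V * ρ z = I) :
    V = I * ∫ z in (0:ℝ)..1, (ρ z)⁻¹ := by
  set f : ℝ → ℝ := fun z => σ * Real.log (ρ z) + ψ z with hf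
  have hderiv : ∀ z : ℝ, HasDerivAt f (I * (ρ z)⁻¹ - V) z := by
    intro z
    have hne : ρ z ≠ 0 := (hρpos z).ne'
    have hρ' : HasDerivAt ρ (deriv ρ z) z :=
      (hρ.differentiable one_ne_zero z).hasDerivAt
    have hψ' : HasDerivAt ψ (deriv ψ z) z :=
      (hψ.differentiable one_ne_zero z).hasDerivAt
    have h1 : HasDerivAt f (σ * (deriv ρ z / ρ z) + deriv ψ z) z :=
      ((hρ'.log hne).const_mul σ).add hψ'
    convert h1 using 1
    have h2 := heq z
    field_simp
    linarith [h2]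
  have hcont : Continuous fun z => I * (ρ z)⁻¹ - V :=
    (continuous_const.mul ((hρ.continuous).inv₀ fun z => (hρpos z).ne')).sub
      continuous_const
  have hint : ∫ z in (0:ℝ)..1, (I * (ρ z)⁻¹ - V) = f 1 - f 0 :=
    integral_eq_sub_of_hasDerivAt (fun x _ => hderiv x)
      (hcont.intervalIntegrable 0 1)
  have hper : f 1 - f 0 = 0 := by
    have h1 : ρ 1 = ρ 0 := by simpa using hρper 0
    have h2 : ψ 1 = ψ 0 := by simpa using hψper 0
    simp [hf, h1, h2]
  have hintinv : IntervalIntegrable (fun z => (ρ z)⁻¹) volume 0 1 :=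
    ((hρ.continuous).inv₀ fun z => (hρpos z).ne').intervalIntegrable 0 1
  rw [intervalIntegral.integral_sub ((hintinv.const_mul I)) intervalIntegrable_const,
    intervalIntegral.integral_const_mul, intervalIntegral.integral_const] at hint
  rw [hper] at hint
  simp at hint
  linarith
end

section
/- Let σ > 0, V ∈ ℝ, ψ : ℝ → ℝ continuously differentiable and 1-periodic, and let (I, ρ̄) be the unique pair with ρ̄ continuously differentiable, strictly positive, 1-periodic, ∫₀¹ ρ̄ = 1, and σ ρ̄' + ψ' ρ̄ + V ρ̄ = I. Define the mean velocity κ := V − I. Then κ = V · (1 − 1/∫₀¹ ρ̄⁻¹), |κ| ≤ |V|, and κ · V ≥ 0 (the mean velocity is always in the direction of the applied voltage). -/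
open MeasureTheory intervalIntegral

/-- Properties of the mean velocity `κ = V - I` of the diffusion-induced
transport: `κ = V (1 - 1/∫₀¹ ρ̄⁻¹)`, `|κ| ≤ |V|`, and `κ` has the sign of `V`. -/
theorem stmt3 (σ V I : ℝ) (hσ : 0 < σ) (ψ : ℝ → ℝ)
    (hψ : ContDiff ℝ 1 ψ) (hψper : ∀ x, ψ (x + 1) = ψ x)
    (ρ : ℝ → ℝ) (hρ : ContDiff ℝ 1 ρ) (hρpos : ∀ x, 0 < ρ x)
    (hρper : ∀ x, ρ (x + 1) = ρ x)
    (hnorm : (∫ z in (0:ℝ)..1, ρ z) = 1)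
    (heq : ∀ z, σ * deriv ρ z + deriv ψ z * ρ z + V * ρ z = I)
    (κ : ℝ) (hκ : κ = V - I) :
    κ = V * (1 - 1 / ∫ z in (0:ℝ)..1, (ρ z)⁻¹) ∧ |κ| ≤ |V| ∧ 0 ≤ κ * V := by
  have hρc : Continuous ρ := hρ.continuous
  have hρd : Differentiable ℝ ρ := hρ.differentiable one_ne_zero
  have hψd : Differentiable ℝ ψ := hψ.differentiable one_ne_zero
  set J : ℝ := ∫ z in (0:ℝ)..1, (ρ z)⁻¹ with hJ
  -- integrability of ρ⁻¹
  have hinvc : Continuous fun z => (ρ z)⁻¹ := hρc.inv₀ (fun z => (hρpos z).ne')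
  -- g z = σ log ρ z + ψ z + V z  has derivative  I / ρ z
  have hg : ∀ z : ℝ, HasDerivAt (fun z => σ * Real.log (ρ z) + ψ z + V * z)
      (I * (ρ z)⁻¹) z := by
    intro z
    have h1 : HasDerivAt (fun z => Real.log (ρ z)) (deriv ρ z / ρ z) z :=
      ((hρd z).hasDerivAt).log (hρpos z).ne'
    have h2 : HasDerivAt (fun z => σ * Real.log (ρ z) + ψ z + V * z)
        (σ * (deriv ρ z / ρ z) + deriv ψ z + V) z := by
      exact ((h1.const_mul σ).add (hψd z).hasDerivAt).add
        (((hasDerivAt_id z).const_mul V).congr_deriv (by ring))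
    convert h2 using 1
    have hz := heq z
    have hρz := (hρpos z).ne'
    field_simp
    linarith
  -- integrate over [0,1]
  have hint : (∫ z in (0:ℝ)..1, I * (ρ z)⁻¹)
      = (σ * Real.log (ρ 1) + ψ 1 + V * 1) - (σ * Real.log (ρ 0) + ψ 0 + V * 0) := by
    exact intervalIntegral.integral_eq_sub_of_hasDerivAt (fun z _ => hg z)
      ((continuous_const.mul hinvc).intervalIntegrable 0 1)
  have hρ10 : ρ 1 = ρ 0 := by have := hρper 0; norm_num at this; exact this
  have hψ10 : ψ 1 = ψ 0 := by rw [← hψper 0]; norm_num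
  have hIJ : I * J = V := by
    have : (∫ z in (0:ℝ)..1, I * (ρ z)⁻¹) = I * J := by
      rw [hJ, intervalIntegral.integral_const_mul]
    rw [this] at hint
    rw [hρ10, hψ10] at hint
    linarith
  -- J ≥ 1 by pointwise AM-GM
  have hJ1 : 1 ≤ J := by
    have hmono : (∫ z in (0:ℝ)..1, (2 - ρ z)) ≤ J := by
      apply intervalIntegral.integral_mono_on (by norm_num)
        ((continuous_const.sub hρc).intervalIntegrable 0 1)
        (hinvc.intervalIntegrable 0 1)
      intro x _
      have hx := hρpos x
      rw [inv_eq_one_div, le_div_iff₀ hx]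
      simp only [Pi.sub_apply]
      nlinarith [sq_nonneg (ρ x - 1)]
    have : (∫ z in (0:ℝ)..1, (2 - ρ z)) = 1 := by
      rw [intervalIntegral.integral_sub (intervalIntegrable_const)
        (hρc.intervalIntegrable 0 1), hnorm]
      norm_num
    linarith
  have hJpos : 0 < J := by linarith
  have hI : I = V / J := by field_simp; linarith
  have hkey : κ = V * (1 - 1 / J) := by
    rw [hκ, hI]; field_simp
  refine ⟨hkey, ?_, ?_⟩
  · have h0 : 0 ≤ 1 - 1 / J := by
      have : 1 / J ≤ 1 := by
        rw [div_le_one hJpos]; exact hJ1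
      linarith
    have h1 : 1 - 1 / J ≤ 1 := by
      have : 0 < 1 / J := by positivity
      linarith
    rw [hkey, abs_mul]
    calc |V| * |1 - 1/J| ≤ |V| * 1 := by
          apply mul_le_mul_of_nonneg_left _ (abs_nonneg V)
          rw [abs_of_nonneg h0]; exact h1
      _ = |V| := by ring
  · rw [hkey]
    have h0 : 0 ≤ 1 - 1 / J := by
      have : 1 / J ≤ 1 := by rw [div_le_one hJpos]; exact hJ1
      linarith
    nlinarith [sq_nonneg V]
end

section
/- Let σ > 0, V ∈ ℝ, ψ : ℝ → ℝ continuously differentiable and 1-periodic, and let (I, ρ̄) be the unique pair with ρ̄ continuously differentiable, strictly positive, 1-periodic, ∫₀¹ ρ̄ = 1, and σ ρ̄' + ψ' ρ̄ + V ρ̄ = I. Then the mean velocity κ := V − I is nonzero if and only if V ≠ 0 and ψ is not a constant function. -/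
open MeasureTheory intervalIntegral

/-- Proposition 1: the process is a transport process (`κ = V - I ≠ 0`)
if and only if the applied voltage `V` is nonzero and the driving potential
`ψ` is not a constant. -/
theorem stmt4 (σ V I : ℝ) (hσ : 0 < σ) (ψ : ℝ → ℝ)
    (hψ : ContDiff ℝ 1 ψ) (hψper : ∀ x, ψ (x + 1) = ψ x)
    (ρ : ℝ → ℝ) (hρ : ContDiff ℝ 1 ρ) (hρpos : ∀ x, 0 < ρ x)
    (hρper : ∀ x, ρ (x + 1) = ρ x)
    (hnorm : (∫ z in (0:ℝ)..1, ρ z) = 1)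
    (heq : ∀ z, σ * deriv ρ z + deriv ψ z * ρ z + V * ρ z = I) :
    V - I ≠ 0 ↔ (V ≠ 0 ∧ ¬ ∃ c : ℝ, ∀ x, ψ x = c) := by
  have hρd : Differentiable ℝ ρ := hρ.differentiable one_ne_zero
  have hψd : Differentiable ℝ ψ := hψ.differentiable one_ne_zero
  have hρ'c : Continuous (deriv ρ) := hρ.continuous_deriv le_rfl
  have hψ'c : Continuous (deriv ψ) := hψ.continuous_deriv le_rfl
  have hρc : Continuous ρ := hρ.continuous
  have hψc : Continuous ψ := hψ.continuous
  have hρne : ∀ x, ρ x ≠ 0 := fun x => (hρpos x).ne'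
  have hinvc : Continuous fun z => (ρ z)⁻¹ := hρc.inv₀ hρne
  -- FTC facts
  have h1 : (∫ z in (0:ℝ)..1, deriv ρ z) = 0 := by
    rw [intervalIntegral.integral_deriv_eq_sub (fun x _ => hρd x)
      (hρ'c.intervalIntegrable 0 1)]
    have := hρper 0
    simp only [zero_add] at this
    rw [this]; ring
  have h2 : (∫ z in (0:ℝ)..1, deriv ψ z) = 0 := by
    rw [intervalIntegral.integral_deriv_eq_sub (fun x _ => hψd x)
      (hψ'c.intervalIntegrable 0 1)]
    have := hψper 0
    simp only [zero_add] at this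
    rw [this]; ring
  have h3 : (∫ z in (0:ℝ)..1, deriv ρ z * (ρ z)⁻¹) = 0 := by
    have hder : ∀ x ∈ Set.uIcc (0:ℝ) 1,
        HasDerivAt (fun y => Real.log (ρ y)) (deriv ρ x * (ρ x)⁻¹) x := by
      intro x _
      have := ((hρd x).hasDerivAt).log (hρne x)
      simpa [div_eq_mul_inv] using this
    rw [intervalIntegral.integral_eq_sub_of_hasDerivAt hder
      ((hρ'c.mul hinvc).intervalIntegrable 0 1)]
    have := hρper 0
    simp only [zero_add] at this
    rw [this]; ring
  -- identity A : ∫ ψ' ρ = I - V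
  have hA : (∫ z in (0:ℝ)..1, deriv ψ z * ρ z) = I - V := by
    have : (∫ z in (0:ℝ)..1, (σ * deriv ρ z + deriv ψ z * ρ z + V * ρ z)) = I := by
      simp only [heq]; simp
    rw [intervalIntegral.integral_add (f := fun z => σ * deriv ρ z + deriv ψ z * ρ z) (g := fun z => V * ρ z)
        (((continuous_const.mul hρ'c).intervalIntegrable 0 1).add
          ((hψ'c.mul hρc).intervalIntegrable 0 1))
        ((continuous_const.mul hρc).intervalIntegrable 0 1),
      intervalIntegral.integral_add (f := fun z => σ * deriv ρ z) (g := fun z => deriv ψ z * ρ z) ((continuous_const.mul hρ'c).intervalIntegrable 0 1)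
        ((hψ'c.mul hρc).intervalIntegrable 0 1),
      intervalIntegral.integral_const_mul, intervalIntegral.integral_const_mul,
      h1, hnorm] at this
    linarith
  -- identity B : I * ∫ 1/ρ = V
  have hJpos : 0 < (∫ z in (0:ℝ)..1, (ρ z)⁻¹) :=
    intervalIntegral_pos_of_pos (hinvc.intervalIntegrable 0 1)
      (fun x => inv_pos.2 (hρpos x)) one_pos
  have hB : I * (∫ z in (0:ℝ)..1, (ρ z)⁻¹) = V := by
    have hpt : ∀ z, σ * (deriv ρ z * (ρ z)⁻¹) + deriv ψ z + V = I * (ρ z)⁻¹ := by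
      intro z
      have hz := mul_inv_cancel₀ (hρne z)
      rw [← heq z]
      field_simp
      linear_combination -(deriv ψ z + V) * hz
    have : (∫ z in (0:ℝ)..1, (σ * (deriv ρ z * (ρ z)⁻¹) + deriv ψ z + V)) =
        ∫ z in (0:ℝ)..1, I * (ρ z)⁻¹ := by
      simp only [hpt]
    rw [intervalIntegral.integral_add (f := fun z => σ * (deriv ρ z * (ρ z)⁻¹) + deriv ψ z) (g := fun _ => V)
        (((continuous_const.mul (hρ'c.mul hinvc)).intervalIntegrable 0 1).add
          (hψ'c.intervalIntegrable 0 1))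
        intervalIntegrable_const,
      intervalIntegral.integral_add (f := fun z => σ * (deriv ρ z * (ρ z)⁻¹)) (g := fun z => deriv ψ z) ((continuous_const.mul (hρ'c.mul hinvc)).intervalIntegrable 0 1)
        (hψ'c.intervalIntegrable 0 1),
      intervalIntegral.integral_const_mul, intervalIntegral.integral_const_mul,
      h3, h2] at this
    simp at this
    linarith
  constructor
  · intro hκ
    constructor
    · intro hV0
      apply hκ
      rw [hV0] at hB ⊢
      have : I = 0 := by
        rcases mul_eq_zero.1 hB with h | h
        · exact h
        · exact absurd h hJpos.ne'
      rw [this]; ring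
    · rintro ⟨c, hc⟩
      apply hκ
      have : deriv ψ = fun _ => (0:ℝ) := by
        have : ψ = fun _ => c := funext hc
        rw [this]; ext x; simp
      rw [this] at hA
      simp at hA
      linarith
  · rintro ⟨hV, hnc⟩ h0
    have hIV : I = V := by linarith
    -- then ∫ 1/ρ = 1
    have hJ1 : (∫ z in (0:ℝ)..1, (ρ z)⁻¹) = 1 := by
      rw [hIV] at hB
      have : V * (∫ z in (0:ℝ)..1, (ρ z)⁻¹) = V * 1 := by simpa using hB
      exact mul_left_cancel₀ hV this
    -- f = ρ + 1/ρ - 2 is nonneg, continuous, periodic, with ∫₀¹ f = 0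
    set f : ℝ → ℝ := fun z => ρ z + (ρ z)⁻¹ - 2 with hf
    have hfc : Continuous f := (hρc.add hinvc).sub continuous_const
    have hfnn : ∀ x, 0 ≤ f x := by
      intro x
      have h := hρpos x
      have : ρ x + (ρ x)⁻¹ - 2 = (ρ x - 1) ^ 2 / ρ x := by field_simp; ring
      rw [hf]; simp only [this]
      positivity
    have hfint : (∫ z in (0:ℝ)..1, f z) = 0 := by
      simp only [hf]
      rw [intervalIntegral.integral_sub (f := fun z => ρ z + (ρ z)⁻¹) (g := fun _ => 2) ((hρc.add hinvc).intervalIntegrable 0 1)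
        intervalIntegrable_const,
        intervalIntegral.integral_add (f := fun z => ρ z) (g := fun z => (ρ z)⁻¹) (hρc.intervalIntegrable 0 1)
        (hinvc.intervalIntegrable 0 1), hnorm, hJ1]
      norm_num
    have hfper : Function.Periodic f 1 := by
      intro x; simp only [hf, hρper x]
    -- f = 0 everywhere, hence ρ = 1 everywhere
    have hρ1 : ∀ x, ρ x = 1 := by
      intro x₀
      by_contra hne
      have hfx : 0 < f x₀ := by
        have h := hρpos x₀
        have hsq : 0 < (ρ x₀ - 1) ^ 2 := by
          have : ρ x₀ - 1 ≠ 0 := sub_ne_zero.2 hne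
          positivity
        have : ρ x₀ + (ρ x₀)⁻¹ - 2 = (ρ x₀ - 1) ^ 2 / ρ x₀ := by field_simp; ring
        rw [hf]; simp only [this]
        positivity
      -- shift the integral so x₀ is interior
      set c := x₀ - 2⁻¹ with hc
      have hshift : (∫ z in c..(c+1), f z) = 0 := by
        rw [hfper.intervalIntegral_add_eq c 0]
        simpa using hfint
      -- but the integral is positive
      have hpos : 0 < (∫ z in c..(c+1), f z) := by
        rw [intervalIntegral.integral_pos_iff_support_of_nonneg_ae
          (Filter.Eventually.of_forall hfnn) (hfc.intervalIntegrable c (c+1))]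
        refine ⟨by linarith, ?_⟩
        -- support contains an open nbhd of x₀
        have hopen : IsOpen (f ⁻¹' Set.Ioi 0) := (isOpen_Ioi).preimage hfc
        obtain ⟨ε, hε, hball⟩ := Metric.isOpen_iff.1 hopen x₀ hfx
        set δ := min ε 2⁻¹ with hδ
        have hδpos : 0 < δ := lt_min hε (by norm_num)
        have hδε : δ ≤ ε := min_le_left _ _
        have hδh : δ ≤ 2⁻¹ := min_le_right _ _
        have hsub : Set.Ioo (x₀ - δ) (x₀ + δ) ⊆ Function.support f ∩ Set.Ioc c (c+1) := by
          rintro y ⟨hy1, hy2⟩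
          constructor
          · have hyball : y ∈ Metric.ball x₀ ε := by
              rw [Real.ball_eq_Ioo]
              exact ⟨by linarith, by linarith⟩
            exact Function.mem_support.2 (hball hyball).ne'
          · exact ⟨by rw [hc]; linarith, by rw [hc]; linarith⟩
        calc (0:ENNReal) < volume (Set.Ioo (x₀ - δ) (x₀ + δ)) := by
              rw [Real.volume_Ioo]
              exact ENNReal.ofReal_pos.2 (by linarith)
          _ ≤ volume (Function.support f ∩ Set.Ioc c (c+1)) := measure_mono hsub
      rw [hshift] at hpos
      exact lt_irrefl 0 hpos
    -- so ρ is the constant 1, deriv ρ = 0, and then ψ' = 0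
    have hρconst : ρ = fun _ => (1:ℝ) := funext hρ1
    have hdρ : ∀ x, deriv ρ x = 0 := by
      intro x; rw [hρconst]; simp
    have hdψ : ∀ x, deriv ψ x = 0 := by
      intro x
      have h := heq x
      rw [hdρ x, hρ1 x] at h
      have : deriv ψ x + V = I := by linarith
      linarith
    exact hnc ⟨ψ 0, fun x => is_const_of_deriv_eq_zero hψd hdψ x 0⟩
end

section
/- Let σ > 0, V ∈ ℝ, and ψ : ℝ → ℝ continuous and 1-periodic. Define f₊(z) = exp((Vz + ψ(z))/σ), f₋(z) = exp(−(Vz + ψ(z))/σ), F₊(z) = ∫₀ᶻ f₊(s) ds, F₋(z) = ∫₀ᶻ f₋(s) ds, H₊ = ∫₀¹ f₋(z) F₊(z) dz, and H₋ = ∫₀¹ f₊(z) F₋(z) dz. Define h₊(z) = ∫_z^1 exp(σ⁻¹(ψ(x−z) − ψ(x))) dx for z ∈ [0,1] and h₊(z) = 0 otherwise, and h₋(z) = ∫_{−z}^1 exp(σ⁻¹(ψ(x) − ψ(x+z))) dx for z ∈ [−1,0] and h₋(z) = 0 otherwise. Then H₊ = ∫_ℝ e^(−Vz/σ) h₊(z)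 dz and H₋ = ∫_ℝ e^(−Vz/σ) h₋(z) dz. -/
open MeasureTheory intervalIntegral Real

/-- The quantities `H₊` and `H₋` are Laplace transforms (in the variable `V/σ`)
of the compactly supported kernels `h₊` and `h₋`. -/
theorem stmt8 (σ V : ℝ) (hσ : 0 < σ) (ψ : ℝ → ℝ)
    (hψ : Continuous ψ) (hψper : ∀ x, ψ (x + 1) = ψ x)
    (fp fm Fp Fm : ℝ → ℝ) (Hp Hm : ℝ) (hp hm : ℝ → ℝ)
    (hfp : ∀ z, fp z = Real.exp ((V * z + ψ z) / σ))
    (hfm : ∀ z, fm z = Real.exp (-(V * z + ψ z) / σ))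
    (hFp : ∀ z, Fp z = ∫ s in (0:ℝ)..z, fp s)
    (hFm : ∀ z, Fm z = ∫ s in (0:ℝ)..z, fm s)
    (hHp : Hp = ∫ z in (0:ℝ)..1, fm z * Fp z)
    (hHm : Hm = ∫ z in (0:ℝ)..1, fp z * Fm z)
    (hhp : ∀ z, hp z = if z ∈ Set.Icc (0:ℝ) 1 then
      ∫ x in z..1, Real.exp (σ⁻¹ * (ψ (x - z) - ψ x)) else 0)
    (hhm : ∀ z, hm z = if z ∈ Set.Icc (-1:ℝ) 0 then
      ∫ x in (-z)..1, Real.exp (σ⁻¹ * (ψ x - ψ (x + z))) else 0) :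
    Hp = ∫ z : ℝ, Real.exp (-(V * z) / σ) * hp z ∧
    Hm = ∫ z : ℝ, Real.exp (-(V * z) / σ) * hm z := by
  have hσ' : σ ≠ 0 := hσ.ne'
  constructor
  · -- the H₊ case
    set K : ℝ × ℝ → ℝ := fun p =>
      Real.exp (-(V * p.2) / σ) * Real.exp (σ⁻¹ * (ψ (p.1 - p.2) - ψ p.1)) with hK
    set S : Set (ℝ × ℝ) := {p | 0 ≤ p.2 ∧ p.2 < p.1 ∧ p.1 ≤ 1} with hS
    have hKcont : Continuous K := by fun_prop
    have hSm : MeasurableSet S := by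
      apply MeasurableSet.inter (measurableSet_le measurable_const measurable_snd)
      exact (measurableSet_lt measurable_snd measurable_fst).inter
        (measurableSet_le measurable_fst measurable_const)
    have hSsub : S ⊆ Set.Icc ((0:ℝ), (0:ℝ)) (1, 1) := by
      rintro ⟨z, u⟩ ⟨h1, h2, h3⟩
      exact ⟨⟨le_of_lt (lt_of_le_of_lt h1 h2), h1⟩, ⟨h3, le_of_lt (lt_of_lt_of_le h2 h3)⟩⟩
    have hGint : Integrable (S.indicator K) := by
      refine IntegrableOn.integrable_indicator ?_ hSm
      exact (hKcont.continuousOn.integrableOn_compact isCompact_Icc).mono_set hSsub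
    -- rewrite the inner integral
    have key1 : ∀ z ∈ Set.Ioc (0:ℝ) 1, fm z * Fp z = ∫ u, S.indicator K (z, u) := by
      intro z hz
      have hfun : (fun u => S.indicator K (z, u))
          = (Set.Ico (0:ℝ) z).indicator (fun u => K (z, u)) := by
        funext u
        by_cases h : u ∈ Set.Ico (0:ℝ) z
        · rw [Set.indicator_of_mem h, Set.indicator_of_mem]
          exact ⟨h.1, h.2, hz.2⟩
        · rw [Set.indicator_of_notMem h, Set.indicator_of_notMem]
          intro hc
          exact h ⟨hc.1, hc.2.1⟩
      rw [hfun, MeasureTheory.integral_indicator measurableSet_Ico,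
        setIntegral_congr_set Ico_ae_eq_Ioc,
        ← intervalIntegral.integral_of_le hz.1.le]
      have : Fp z = ∫ u in (0:ℝ)..z, fp (z - u) := by
        rw [intervalIntegral.integral_comp_sub_left fp z, sub_self, sub_zero, hFp]
      rw [this, ← intervalIntegral.integral_const_mul]
      refine intervalIntegral.integral_congr fun u _ => ?_
      simp only [hK, hfm, hfp]
      rw [← Real.exp_add, ← Real.exp_add]
      congr 1
      field_simp
      ring
    have key0 : ∀ z, z ∉ Set.Ioc (0:ℝ) 1 → (∫ u, S.indicator K (z, u)) = 0 := by
      intro z hz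
      have : ∀ u, S.indicator K (z, u) = 0 := by
        intro u
        refine Set.indicator_of_notMem (fun hc => hz ⟨lt_of_le_of_lt hc.1 hc.2.1, hc.2.2⟩) _
      simp [this]
    have step : Hp = ∫ z, ∫ u, S.indicator K (z, u) := by
      rw [hHp, intervalIntegral.integral_of_le zero_le_one,
        ← setIntegral_eq_integral_of_forall_compl_eq_zero key0]
      exact setIntegral_congr_fun measurableSet_Ioc key1
    have hswap : (∫ z, ∫ u, S.indicator K (z, u)) = ∫ u, ∫ z, S.indicator K (z, u) := by
      apply MeasureTheory.integral_integral_swap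
      rw [← MeasureTheory.Measure.volume_eq_prod ℝ ℝ]
      exact hGint
    have key2 : ∀ u, (∫ z, S.indicator K (z, u))
        = Real.exp (-(V * u) / σ) * hp u := by
      intro u
      by_cases hu : u ∈ Set.Icc (0:ℝ) 1
      · have hfun : (fun z => S.indicator K (z, u))
            = (Set.Ioc u 1).indicator (fun z => K (z, u)) := by
          funext z
          by_cases h : z ∈ Set.Ioc u 1
          · rw [Set.indicator_of_mem h, Set.indicator_of_mem]
            exact ⟨hu.1, h.1, h.2⟩
          · rw [Set.indicator_of_notMem h, Set.indicator_of_notMem]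
            intro hc
            exact h ⟨hc.2.1, hc.2.2⟩
        rw [hfun, MeasureTheory.integral_indicator measurableSet_Ioc,
          ← intervalIntegral.integral_of_le hu.2, hhp, if_pos hu,
          ← intervalIntegral.integral_const_mul]
      · have h0 : ∀ z, S.indicator K (z, u) = 0 := by
          intro z
          refine Set.indicator_of_notMem (fun hc => hu ⟨hc.1, ?_⟩) _
          exact le_of_lt (lt_of_lt_of_le hc.2.1 hc.2.2)
        rw [hhp, if_neg hu]
        simp [h0]
    rw [step, hswap]
    exact integral_congr_ae (Filter.Eventually.of_forall key2)
  · -- the H₋ case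
    set K : ℝ × ℝ → ℝ := fun p =>
      Real.exp (-(V * p.2) / σ) * Real.exp (σ⁻¹ * (ψ p.1 - ψ (p.1 + p.2))) with hK
    set S : Set (ℝ × ℝ) := {p | -p.1 < p.2 ∧ p.2 ≤ 0 ∧ p.1 ≤ 1} with hS
    have hKcont : Continuous K := by fun_prop
    have hSm : MeasurableSet S := by
      apply MeasurableSet.inter (measurableSet_lt (measurable_fst.neg) measurable_snd)
      exact (measurableSet_le measurable_snd measurable_const).inter
        (measurableSet_le measurable_fst measurable_const)
    have hSsub : S ⊆ Set.Icc ((0:ℝ), (-1:ℝ)) (1, 0) := by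
      rintro ⟨z, u⟩ ⟨h1, h2, h3⟩
      exact ⟨⟨le_of_lt (neg_lt_zero.mp (lt_of_lt_of_le h1 h2)),
        le_of_lt (lt_of_le_of_lt (neg_le_neg h3) h1)⟩, ⟨h3, h2⟩⟩
    have hGint : Integrable (S.indicator K) := by
      refine IntegrableOn.integrable_indicator ?_ hSm
      exact (hKcont.continuousOn.integrableOn_compact isCompact_Icc).mono_set hSsub
    have key1 : ∀ z ∈ Set.Ioc (0:ℝ) 1, fp z * Fm z = ∫ u, S.indicator K (z, u) := by
      intro z hz
      have hfun : (fun u => S.indicator K (z, u))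
          = (Set.Ioc (-z) (0:ℝ)).indicator (fun u => K (z, u)) := by
        funext u
        by_cases h : u ∈ Set.Ioc (-z) (0:ℝ)
        · rw [Set.indicator_of_mem h, Set.indicator_of_mem]
          exact ⟨h.1, h.2, hz.2⟩
        · rw [Set.indicator_of_notMem h, Set.indicator_of_notMem]
          intro hc
          exact h ⟨hc.1, hc.2.1⟩
      rw [hfun, MeasureTheory.integral_indicator measurableSet_Ioc,
        ← intervalIntegral.integral_of_le (by linarith [hz.1] : -z ≤ (0:ℝ))]
      have : Fm z = ∫ u in (-z)..(0:ℝ), fm (u + z) := by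
        rw [intervalIntegral.integral_comp_add_right fm z, neg_add_cancel, zero_add, hFm]
      rw [this, ← intervalIntegral.integral_const_mul]
      refine intervalIntegral.integral_congr fun u _ => ?_
      simp only [hK, hfm, hfp]
      rw [← Real.exp_add, ← Real.exp_add]
      congr 1
      field_simp
      ring
    have key0 : ∀ z, z ∉ Set.Ioc (0:ℝ) 1 → (∫ u, S.indicator K (z, u)) = 0 := by
      intro z hz
      have : ∀ u, S.indicator K (z, u) = 0 := by
        intro u
        refine Set.indicator_of_notMem (fun hc => hz ⟨?_, hc.2.2⟩) _
        nlinarith [hc.1, hc.2.1]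
      simp [this]
    have step : Hm = ∫ z, ∫ u, S.indicator K (z, u) := by
      rw [hHm, intervalIntegral.integral_of_le zero_le_one,
        ← setIntegral_eq_integral_of_forall_compl_eq_zero key0]
      exact setIntegral_congr_fun measurableSet_Ioc key1
    have hswap : (∫ z, ∫ u, S.indicator K (z, u)) = ∫ u, ∫ z, S.indicator K (z, u) := by
      apply MeasureTheory.integral_integral_swap
      rw [← MeasureTheory.Measure.volume_eq_prod ℝ ℝ]
      exact hGint
    have key2 : ∀ u, (∫ z, S.indicator K (z, u))
        = Real.exp (-(V * u) / σ) * hm u := by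
      intro u
      by_cases hu : u ∈ Set.Icc (-1:ℝ) 0
      · have hfun : (fun z => S.indicator K (z, u))
            = (Set.Ioc (-u) 1).indicator (fun z => K (z, u)) := by
          funext z
          by_cases h : z ∈ Set.Ioc (-u) 1
          · rw [Set.indicator_of_mem h, Set.indicator_of_mem]
            exact ⟨by linarith [h.1], hu.2, h.2⟩
          · rw [Set.indicator_of_notMem h, Set.indicator_of_notMem]
            intro hc
            exact h ⟨by linarith [hc.1], hc.2.2⟩
        rw [hfun, MeasureTheory.integral_indicator measurableSet_Ioc,
          ← intervalIntegral.integral_of_le (by linarith [hu.1] : -u ≤ (1:ℝ)),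
          hhm, if_pos hu, ← intervalIntegral.integral_const_mul]
      · have h0 : ∀ z, S.indicator K (z, u) = 0 := by
          intro z
          refine Set.indicator_of_notMem (fun hc => hu ⟨?_, hc.2.1⟩) _
          linarith [hc.1, hc.2.2]
        rw [hhm, if_neg hu]
        simp [h0]
    rw [step, hswap]
    exact integral_congr_ae (Filter.Eventually.of_forall key2)
end

section
/- Let σ > 0, V ∈ ℝ, and ψ : ℝ → ℝ continuous and 1-periodic. Define f₊(z) = exp((Vz + ψ(z))/σ), f₋(z) = exp(−(Vz + ψ(z))/σ), F₊(z) = ∫₀ᶻ f₊(s) ds, F₋(z) = ∫₀ᶻ f₋(s) ds, H₊ = ∫₀¹ f₋(z) F₊(z) dz, and H₋ = ∫₀¹ f₊(z) F₋(z) dz. Then ∫_{−1}^0 e^(−Vz/σ) (∫₀¹ exp(σ⁻¹(ψ(x) − ψ(x+z))) dx) dz = e^(V/σ) H₊ + H₋. In particular, if I = (1 − e^(−V/σ))/(H₊ + e^(−V/σ) H₋) denotes the response current and V ≠ 0, then ∫_{−1}^0 e^(−Vz/σ) (∫₀¹ exp(σ⁻¹(ψ(x) − ψ(x+z))) dx)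 dz = (e^(V/σ) − 1)/I. -/
open MeasureTheory intervalIntegral Real

set_option maxHeartbeats 1000000 in
/-- Key identity for the inverse problem: the Laplace transform in `V/σ` of
`z ↦ 𝟙_{[-1,0]}(z) ∫₀¹ exp(σ⁻¹(ψ(x)-ψ(x+z))) dx` equals `e^{V/σ} H₊ + H₋`,
that is, `(e^{V/σ} - 1)/I(V,σ)` where `I` is the response current. -/
theorem stmt10 (σ V : ℝ) (hσ : 0 < σ) (ψ : ℝ → ℝ)
    (hψ : Continuous ψ) (hψper : ∀ x, ψ (x + 1) = ψ x)
    (fp fm Fp Fm : ℝ → ℝ) (Hp Hm : ℝ)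
    (hfp : ∀ z, fp z = Real.exp ((V * z + ψ z) / σ))
    (hfm : ∀ z, fm z = Real.exp (-(V * z + ψ z) / σ))
    (hFp : ∀ z, Fp z = ∫ s in (0:ℝ)..z, fp s)
    (hFm : ∀ z, Fm z = ∫ s in (0:ℝ)..z, fm s)
    (hHp : Hp = ∫ z in (0:ℝ)..1, fm z * Fp z)
    (hHm : Hm = ∫ z in (0:ℝ)..1, fp z * Fm z) :
    (∫ z in (-1:ℝ)..0, Real.exp (-(V * z) / σ) *
        ∫ x in (0:ℝ)..1, Real.exp (σ⁻¹ * (ψ x - ψ (x + z)))) =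
      Real.exp (V / σ) * Hp + Hm ∧
    ∀ I : ℝ, I = (1 - Real.exp (-V / σ)) / (Hp + Real.exp (-V / σ) * Hm) →
      V ≠ 0 →
      (∫ z in (-1:ℝ)..0, Real.exp (-(V * z) / σ) *
          ∫ x in (0:ℝ)..1, Real.exp (σ⁻¹ * (ψ x - ψ (x + z)))) =
        (Real.exp (V / σ) - 1) / I := by
  have hσ' : σ ≠ 0 := ne_of_gt hσ
  set e : ℝ := Real.exp (V / σ) with he
  -- continuity
  have hfpc : Continuous fp := by
    have : fp = fun z => Real.exp ((V * z + ψ z) / σ) := funext hfp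
    rw [this]; continuity
  have hfmc : Continuous fm := by
    have : fm = fun z => Real.exp (-(V * z + ψ z) / σ) := funext hfm
    rw [this]; continuity
  have hfp0 : ∀ z, 0 < fp z := fun z => by rw [hfp]; exact Real.exp_pos _
  -- derivatives of the primitives
  have hFpd : ∀ x : ℝ, HasDerivAt Fp (fp x) x := by
    intro x
    have h := intervalIntegral.integral_hasDerivAt_right
      (hfpc.intervalIntegrable 0 x)
      hfpc.stronglyMeasurable.stronglyMeasurableAtFilter hfpc.continuousAt
    exact h.congr_of_eventuallyEq (Filter.Eventually.of_forall fun y => (hFp y))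
  have hFmd : ∀ x : ℝ, HasDerivAt Fm (fm x) x := by
    intro x
    have h := intervalIntegral.integral_hasDerivAt_right
      (hfmc.intervalIntegrable 0 x)
      hfmc.stronglyMeasurable.stronglyMeasurableAtFilter hfmc.continuousAt
    exact h.congr_of_eventuallyEq (Filter.Eventually.of_forall fun y => (hFm y))
  have hFpc : Continuous Fp := by
    apply continuous_iff_continuousAt.2 fun x => (hFpd x).continuousAt
  have hFmc : Continuous Fm := by
    apply continuous_iff_continuousAt.2 fun x => (hFmd x).continuousAt
  -- quasi-periodicity of fm
  have hfmq : ∀ t : ℝ, fm (t - 1) = e * fm t := by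
    intro t
    have hper : ψ (t - 1) = ψ t := by
      have := hψper (t - 1); rw [sub_add_cancel] at this; exact this.symm
    rw [hfm, hfm, hper, he, ← Real.exp_add]
    congr 1
    field_simp
    ring
  -- Hp + Hm = Fp 1 * Fm 1
  have hFp0 : Fp 0 = 0 := by rw [hFp]; simp
  have hFm0 : Fm 0 = 0 := by rw [hFm]; simp
  have hkey : Hp + Hm = Fp 1 * Fm 1 := by
    have hderiv : ∀ x ∈ Set.uIcc (0:ℝ) 1,
        HasDerivAt (fun y => Fp y * Fm y) (fp x * Fm x + fm x * Fp x) x := by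
      intro x _
      have := (hFpd x).mul (hFmd x)
      rw [show fp x * Fm x + fm x * Fp x = fp x * Fm x + Fp x * fm x by ring]; exact this
    have hint : IntervalIntegrable (fun x => fp x * Fm x + fm x * Fp x) volume 0 1 :=
      ((hfpc.mul hFmc).add (hfmc.mul hFpc)).intervalIntegrable 0 1
    have := intervalIntegral.integral_eq_sub_of_hasDerivAt hderiv hint
    rw [hFp0, hFm0] at this
    have hsplit : (∫ x in (0:ℝ)..1, (fp x * Fm x + fm x * Fp x)) = Hm + Hp := by
      rw [intervalIntegral.integral_add (f := fun x => fp x * Fm x) (g := fun x => fm x * Fp x) ((hfpc.mul hFmc).intervalIntegrable 0 1)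
        ((hfmc.mul hFpc).intervalIntegrable 0 1), hHm, hHp]
    rw [hsplit] at this
    linarith [this]
  -- the main computation
  have main : (∫ z in (-1:ℝ)..0, Real.exp (-(V * z) / σ) *
      ∫ x in (0:ℝ)..1, Real.exp (σ⁻¹ * (ψ x - ψ (x + z)))) = e * Hp + Hm := by
    -- rewrite integrand
    have step1 : (∫ z in (-1:ℝ)..0, Real.exp (-(V * z) / σ) *
        ∫ x in (0:ℝ)..1, Real.exp (σ⁻¹ * (ψ x - ψ (x + z)))) =
        ∫ z in (-1:ℝ)..0, ∫ x in (0:ℝ)..1, fp x * fm (x + z) := by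
      apply intervalIntegral.integral_congr
      intro z _
      show Real.exp (-(V * z) / σ) * (∫ x in (0:ℝ)..1, Real.exp (σ⁻¹ * (ψ x - ψ (x + z)))) =
        ∫ x in (0:ℝ)..1, fp x * fm (x + z)
      rw [← intervalIntegral.integral_const_mul]
      apply intervalIntegral.integral_congr
      intro x _
      dsimp only
      rw [hfp, hfm, ← Real.exp_add, ← Real.exp_add]
      congr 1
      field_simp
      ring
    -- Fubini
    have cont2 : Continuous (fun p : ℝ × ℝ => fp p.2 * fm (p.2 + p.1)) := by
      apply (hfpc.comp continuous_snd).mul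
      exact hfmc.comp (continuous_snd.add continuous_fst)
    have hint : Integrable (Function.uncurry fun z x => fp x * fm (x + z))
        ((volume.restrict (Set.Ioc (-1:ℝ) 0)).prod (volume.restrict (Set.Ioc (0:ℝ) 1))) := by
      have hu : Function.uncurry (fun z x => fp x * fm (x + z)) =
          fun p : ℝ × ℝ => fp p.2 * fm (p.2 + p.1) := rfl
      rw [hu, Measure.prod_restrict, ← Measure.volume_eq_prod]
      have h1 : IntegrableOn (fun p : ℝ × ℝ => fp p.2 * fm (p.2 + p.1))
          (Set.Icc (-1:ℝ) 0 ×ˢ Set.Icc (0:ℝ) 1) volume :=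
        cont2.continuousOn.integrableOn_compact (isCompact_Icc.prod isCompact_Icc)
      exact h1.mono_set (Set.prod_mono Set.Ioc_subset_Icc_self Set.Ioc_subset_Icc_self)
    have hswap := MeasureTheory.integral_integral_swap (μ := volume.restrict (Set.Ioc (-1:ℝ) 0))
      (ν := volume.restrict (Set.Ioc (0:ℝ) 1)) (f := fun z x => fp x * fm (x + z)) hint
    have step2 : (∫ z in (-1:ℝ)..0, ∫ x in (0:ℝ)..1, fp x * fm (x + z)) =
        ∫ x in (0:ℝ)..1, ∫ z in (-1:ℝ)..0, fp x * fm (x + z) := by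
      rw [intervalIntegral.integral_of_le (by norm_num : (-1:ℝ) ≤ 0),
        intervalIntegral.integral_of_le (by norm_num : (0:ℝ) ≤ 1)]
      calc (∫ z in Set.Ioc (-1:ℝ) 0, ∫ x in (0:ℝ)..1, fp x * fm (x + z))
          = ∫ z in Set.Ioc (-1:ℝ) 0, ∫ x in Set.Ioc (0:ℝ) 1, fp x * fm (x + z) := by
            refine integral_congr_ae (Filter.Eventually.of_forall fun z => ?_)
            exact intervalIntegral.integral_of_le (by norm_num : (0:ℝ) ≤ 1)
        _ = ∫ x in Set.Ioc (0:ℝ) 1, ∫ z in Set.Ioc (-1:ℝ) 0, fp x * fm (x + z) := hswap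
        _ = ∫ x in Set.Ioc (0:ℝ) 1, ∫ z in (-1:ℝ)..0, fp x * fm (x + z) := by
            refine integral_congr_ae (Filter.Eventually.of_forall fun x => ?_)
            exact (intervalIntegral.integral_of_le (by norm_num : (-1:ℝ) ≤ 0)).symm
    -- inner integral
    have step3 : ∀ x : ℝ, (∫ z in (-1:ℝ)..0, fm (x + z)) =
        (1 - e) * Fm x + e * Fm 1 := by
      intro x
      have h1 : (∫ z in (-1:ℝ)..0, fm (x + z)) = ∫ z in (x-1:ℝ)..x, fm z := by
        simp only [add_comm x]
        rw [intervalIntegral.integral_comp_add_right fm x, zero_add,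
          show (-1:ℝ) + x = x - 1 by ring]
      have h2 : (∫ z in (x-1:ℝ)..x, fm z) = Fm x - Fm (x-1) := by
        rw [hFm, hFm]
        exact (intervalIntegral.integral_interval_sub_left
          (hfmc.intervalIntegrable 0 x) (hfmc.intervalIntegrable 0 (x-1))).symm
      have h3 : Fm (x-1) = e * (Fm x - Fm 1) := by
        have := intervalIntegral.integral_comp_sub_right fm 1 (a := 1) (b := x)
        have h4 : (∫ t in (1:ℝ)..x, fm (t - 1)) = ∫ t in (1:ℝ)..x, e * fm t :=
          intervalIntegral.integral_congr fun t _ => hfmq t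
        rw [h4, intervalIntegral.integral_const_mul] at this
        have h5 : (∫ t in (1:ℝ)..x, fm t) = Fm x - Fm 1 := by
          rw [hFm, hFm]
          exact (intervalIntegral.integral_interval_sub_left
            (hfmc.intervalIntegrable 0 x) (hfmc.intervalIntegrable 0 1)).symm
        rw [h5] at this
        rw [hFm]
        norm_num at this ⊢
        rw [← this]
      rw [h1, h2, h3]; ring
    have step4 : (∫ x in (0:ℝ)..1, ∫ z in (-1:ℝ)..0, fp x * fm (x + z)) =
        ∫ x in (0:ℝ)..1, ((1-e) * (fp x * Fm x) + (e * Fm 1) * fp x) := by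
      apply intervalIntegral.integral_congr
      intro x _
      dsimp only
      rw [intervalIntegral.integral_const_mul, step3 x]
      ring
    have hfp1 : (∫ x in (0:ℝ)..1, fp x) = Fp 1 := (hFp 1).symm
    have step5 : (∫ x in (0:ℝ)..1, ((1-e) * (fp x * Fm x) + (e * Fm 1) * fp x)) =
        (1-e) * Hm + (e * Fm 1) * Fp 1 := by
      rw [intervalIntegral.integral_add (f := fun x => (1-e) * (fp x * Fm x)) (g := fun x => (e * Fm 1) * fp x)
        (((hfpc.mul hFmc).intervalIntegrable 0 1).const_mul _)
        ((hfpc.intervalIntegrable 0 1).const_mul _),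
        intervalIntegral.integral_const_mul, intervalIntegral.integral_const_mul,
        hfp1, hHm]
    rw [step1, step2, step4, step5]
    have : Fm 1 * Fp 1 = Hp + Hm := by rw [hkey]; ring
    rw [mul_assoc, this]
    ring
  refine ⟨main, ?_⟩
  intro I hI hV
  have hc : (1 : ℝ) - Real.exp (-V / σ) ≠ 0 := by
    intro h
    have : Real.exp (-V / σ) = 1 := by linarith
    rw [Real.exp_eq_one_iff] at this
    exact hV (by field_simp at this; linarith)
  have hee : e * Real.exp (-V / σ) = 1 := by
    rw [he, ← Real.exp_add]
    rw [show V / σ + -V / σ = 0 by ring, Real.exp_zero]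
  rw [main, hI, div_div_eq_mul_div]
  rw [eq_div_iff hc]
  linear_combination (-(Hp + Hm)) * hee
end

section
/- Let σ > 0 and ψ : ℝ → ℝ continuous and 1-periodic. For V ∈ ℝ define f₊(z) = exp((Vz + ψ(z))/σ), f₋(z) = exp(−(Vz + ψ(z))/σ), F₊(z) = ∫₀ᶻ f₊(s) ds, F₋(z) = ∫₀ᶻ f₋(s) ds, H₊(V) = ∫₀¹ f₋(z) F₊(z) dz, H₋(V) = ∫₀¹ f₊(z) F₋(z) dz, and for V ≠ 0 the response current I(V) = (1 − e^(−V/σ))/(H₊(V) + e^(−V/σ) H₋(V)). Then lim_{V → 0, V ≠ 0} (e^(V/σ) − 1)/I(V) = ∫_{−1}^0 ∫₀¹ exp(σ⁻¹(ψ(x) − ψ(x+z))) dx dz. Equivalently, the function V ↦ I(V), extended by I(0) = 0, is differentiable at V = 0 with derivative (dI/dV)(0) = 1/(σ · ∫_{−1}^0 ∫₀¹ exp(σ⁻¹(ψ(x) − ψ(x+z))) dx dz). -/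
open MeasureTheory intervalIntegral Real Filter Topology

section Aux

variable (σ : ℝ) (ψ : ℝ → ℝ)

/-- Fubini + periodicity: the double integral factorizes. -/
lemma aux_double_integral (hσ : 0 < σ) (hψ : Continuous ψ)
    (hψper : ∀ x, ψ (x + 1) = ψ x) :
    (∫ z in (-1:ℝ)..0, ∫ x in (0:ℝ)..1, Real.exp (σ⁻¹ * (ψ x - ψ (x + z))))
      = (∫ x in (0:ℝ)..1, Real.exp (σ⁻¹ * ψ x))
        * (∫ u in (0:ℝ)..1, Real.exp (σ⁻¹ * -ψ u)) := by
  set k : ℝ → ℝ → ℝ := fun z x => Real.exp (σ⁻¹ * (ψ x - ψ (x + z))) with hk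
  have hkc : Continuous (Function.uncurry k) := by
    apply Real.continuous_exp.comp
    fun_prop
  -- integrability on the product of Ioc's
  have hint : Integrable (Function.uncurry k)
      ((volume.restrict (Set.Ioc (-1:ℝ) 0)).prod (volume.restrict (Set.Ioc (0:ℝ) 1))) := by
    rw [Measure.prod_restrict, ← Measure.volume_eq_prod]
    apply (hkc.continuousOn.integrableOn_compact (isCompact_Icc.prod isCompact_Icc)).mono_set
    exact Set.prod_mono Set.Ioc_subset_Icc_self Set.Ioc_subset_Icc_self
  have swap := MeasureTheory.integral_integral_swap hint
  have h1 : (∫ z in (-1:ℝ)..0, ∫ x in (0:ℝ)..1, k z x)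
      = ∫ z in Set.Ioc (-1:ℝ) 0, ∫ x in Set.Ioc (0:ℝ) 1, k z x := by
    rw [intervalIntegral.integral_of_le (by norm_num : (-1:ℝ) ≤ 0)]
    congr 1
    funext z
    rw [intervalIntegral.integral_of_le (by norm_num : (0:ℝ) ≤ 1)]
  rw [h1, swap]
  have h2 : ∀ x : ℝ, (∫ z in Set.Ioc (-1:ℝ) 0, k z x)
      = Real.exp (σ⁻¹ * ψ x) * (∫ u in (0:ℝ)..1, Real.exp (σ⁻¹ * -ψ u)) := by
    intro x
    rw [← intervalIntegral.integral_of_le (by norm_num : (-1:ℝ) ≤ 0)]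
    have e1 : ∀ z : ℝ, k z x
        = Real.exp (σ⁻¹ * ψ x) * Real.exp (σ⁻¹ * -ψ (z + x)) := by
      intro z
      show Real.exp (σ⁻¹ * (ψ x - ψ (x + z))) = _
      rw [← Real.exp_add, add_comm z x]
      congr 1
      ring
    rw [intervalIntegral.integral_congr (fun z _ => e1 z),
      intervalIntegral.integral_const_mul]
    congr 1
    have := intervalIntegral.integral_comp_add_right
      (a := (-1:ℝ)) (b := 0) (fun u => Real.exp (σ⁻¹ * -ψ u)) x
    rw [this]
    have hper : Function.Periodic (fun u => Real.exp (σ⁻¹ * -ψ u)) 1 := by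
      intro u; simp [hψper u]
    have := hper.intervalIntegral_add_eq (x - 1) 0
    simp only [zero_add] at this
    rw [show (-1 : ℝ) + x = x - 1 by ring, show (0 : ℝ) + x = x - 1 + 1 by ring, this]
  calc (∫ x in Set.Ioc (0:ℝ) 1, ∫ z in Set.Ioc (-1:ℝ) 0, k z x)
      = ∫ x in Set.Ioc (0:ℝ) 1,
          Real.exp (σ⁻¹ * ψ x) * (∫ u in (0:ℝ)..1, Real.exp (σ⁻¹ * -ψ u)) := by
        exact setIntegral_congr_fun measurableSet_Ioc (fun x _ => h2 x)
    _ = (∫ x in (0:ℝ)..1, Real.exp (σ⁻¹ * ψ x))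
        * (∫ u in (0:ℝ)..1, Real.exp (σ⁻¹ * -ψ u)) := by
        rw [← intervalIntegral.integral_of_le (by norm_num : (0:ℝ) ≤ 1),
          intervalIntegral.integral_mul_const]

/-- FTC: the sum of the two integrals at `V = 0` factorizes. -/
lemma aux_ftc (hσ : 0 < σ) (hψ : Continuous ψ) :
    (∫ z in (0:ℝ)..1, Real.exp (σ⁻¹ * -ψ z) * ∫ s in (0:ℝ)..z, Real.exp (σ⁻¹ * ψ s))
      + (∫ z in (0:ℝ)..1, Real.exp (σ⁻¹ * ψ z) * ∫ s in (0:ℝ)..z, Real.exp (σ⁻¹ * -ψ s))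
      = (∫ x in (0:ℝ)..1, Real.exp (σ⁻¹ * ψ x))
        * (∫ u in (0:ℝ)..1, Real.exp (σ⁻¹ * -ψ u)) := by
  set ep : ℝ → ℝ := fun s => Real.exp (σ⁻¹ * ψ s) with hep
  set em : ℝ → ℝ := fun s => Real.exp (σ⁻¹ * -ψ s) with hem
  have hcp : Continuous ep := by fun_prop
  have hcm : Continuous em := by fun_prop
  set Fp : ℝ → ℝ := fun z => ∫ s in (0:ℝ)..z, ep s with hFp
  set Fm : ℝ → ℝ := fun z => ∫ s in (0:ℝ)..z, em s with hFm
  have hFpc : Continuous Fp := intervalIntegral.continuous_primitive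
    (fun a b => hcp.intervalIntegrable a b) 0
  have hFmc : Continuous Fm := intervalIntegral.continuous_primitive
    (fun a b => hcm.intervalIntegrable a b) 0
  have hderiv : ∀ z : ℝ, HasDerivAt (fun z => Fp z * Fm z) (ep z * Fm z + Fp z * em z) z :=
    fun z => ((hcp.integral_hasStrictDerivAt 0 z).hasDerivAt.mul
      (hcm.integral_hasStrictDerivAt 0 z).hasDerivAt)
  have hint : IntervalIntegrable (fun z => ep z * Fm z + Fp z * em z) volume 0 1 :=
    (((hcp.mul hFmc).add (hFpc.mul hcm)).intervalIntegrable 0 1)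
  have key := intervalIntegral.integral_eq_sub_of_hasDerivAt
    (fun z _ => hderiv z) hint
  have h0 : Fp 0 * Fm 0 = 0 := by simp [hFp, hFm]
  rw [h0, sub_zero] at key
  have hsplit : (∫ z in (0:ℝ)..1, (ep z * Fm z + Fp z * em z))
      = (∫ z in (0:ℝ)..1, em z * Fp z) + (∫ z in (0:ℝ)..1, ep z * Fm z) := by
    rw [intervalIntegral.integral_add (f := fun z => ep z * Fm z) (g := fun z => Fp z * em z)
      ((hcp.mul hFmc).intervalIntegrable 0 1)
      ((hFpc.mul hcm).intervalIntegrable 0 1)]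
    rw [add_comm]
    congr 1
    exact intervalIntegral.integral_congr (fun z _ => mul_comm (Fp z) (em z))
  rw [hsplit] at key
  exact key

end Aux

/-- The zero-voltage resistance: `lim_{V→0} (e^{V/σ}-1)/I(V)` equals the
double integral `∫_{-1}^0 ∫₀¹ exp(σ⁻¹(ψ(x)-ψ(x+z))) dx dz`; equivalently, the
response current `I`, extended by `I(0) = 0`, is differentiable at `V = 0`
with derivative `(σ ∫_{-1}^0 ∫₀¹ exp(σ⁻¹(ψ(x)-ψ(x+z))) dx dz)⁻¹`. -/
theorem stmt11 (σ : ℝ) (hσ : 0 < σ) (ψ : ℝ → ℝ)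
    (hψ : Continuous ψ) (hψper : ∀ x, ψ (x + 1) = ψ x)
    (Icur : ℝ → ℝ)
    (hI : ∀ V : ℝ, V ≠ 0 → Icur V =
      (1 - Real.exp (-V / σ)) /
        ((∫ z in (0:ℝ)..1, Real.exp (-(V * z + ψ z) / σ) *
            ∫ s in (0:ℝ)..z, Real.exp ((V * s + ψ s) / σ)) +
          Real.exp (-V / σ) *
            ∫ z in (0:ℝ)..1, Real.exp ((V * z + ψ z) / σ) *
              ∫ s in (0:ℝ)..z, Real.exp (-(V * s + ψ s) / σ)))
    (hI0 : Icur 0 = 0) :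
    Tendsto (fun V : ℝ => (Real.exp (V / σ) - 1) / Icur V)
        (𝓝[≠] 0)
        (𝓝 (∫ z in (-1:ℝ)..0, ∫ x in (0:ℝ)..1,
          Real.exp (σ⁻¹ * (ψ x - ψ (x + z))))) ∧
    HasDerivAt Icur
      (1 / (σ * ∫ z in (-1:ℝ)..0, ∫ x in (0:ℝ)..1,
        Real.exp (σ⁻¹ * (ψ x - ψ (x + z))))) 0 := by
  have hσ0 : σ ≠ 0 := ne_of_gt hσ
  set D := ∫ z in (-1:ℝ)..0, ∫ x in (0:ℝ)..1, Real.exp (σ⁻¹ * (ψ x - ψ (x + z))) with hD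
  set Hp : ℝ → ℝ := fun V => ∫ z in (0:ℝ)..1, Real.exp (-(V * z + ψ z) / σ) *
      ∫ s in (0:ℝ)..z, Real.exp ((V * s + ψ s) / σ) with hHp
  set Hm : ℝ → ℝ := fun V => ∫ z in (0:ℝ)..1, Real.exp ((V * z + ψ z) / σ) *
      ∫ s in (0:ℝ)..z, Real.exp (-(V * s + ψ s) / σ) with hHm
  -- continuity of Hp, Hm
  have hFpc : Continuous (fun p : ℝ × ℝ => ∫ s in (0:ℝ)..p.2,
      Real.exp ((p.1 * s + ψ s) / σ)) := by
    apply intervalIntegral.continuous_parametric_primitive_of_continuous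
      (f := fun V s => Real.exp ((V * s + ψ s) / σ))
    fun_prop
  have hFmc : Continuous (fun p : ℝ × ℝ => ∫ s in (0:ℝ)..p.2,
      Real.exp (-(p.1 * s + ψ s) / σ)) := by
    apply intervalIntegral.continuous_parametric_primitive_of_continuous
      (f := fun V s => Real.exp (-(V * s + ψ s) / σ))
    fun_prop
  have hHpc : Continuous Hp := by
    apply intervalIntegral.continuous_parametric_intervalIntegral_of_continuous'
      (f := fun V z => Real.exp (-(V * z + ψ z) / σ) *
        ∫ s in (0:ℝ)..z, Real.exp ((V * s + ψ s) / σ))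
    apply Continuous.mul
    · fun_prop
    · exact hFpc
  have hHmc : Continuous Hm := by
    apply intervalIntegral.continuous_parametric_intervalIntegral_of_continuous'
      (f := fun V z => Real.exp ((V * z + ψ z) / σ) *
        ∫ s in (0:ℝ)..z, Real.exp (-(V * s + ψ s) / σ))
    apply Continuous.mul
    · fun_prop
    · exact hFmc
  -- value at 0
  have hzero : Hp 0 + Hm 0 = D := by
    have e1 : Hp 0 = ∫ z in (0:ℝ)..1, Real.exp (σ⁻¹ * -ψ z) *
        ∫ s in (0:ℝ)..z, Real.exp (σ⁻¹ * ψ s) := by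
      simp [hHp, div_eq_inv_mul]
    have e2 : Hm 0 = ∫ z in (0:ℝ)..1, Real.exp (σ⁻¹ * ψ z) *
        ∫ s in (0:ℝ)..z, Real.exp (σ⁻¹ * -ψ s) := by
      simp [hHm, div_eq_inv_mul]
    rw [e1, e2, aux_ftc σ ψ hσ hψ, hD, aux_double_integral σ ψ hσ hψ hψper]
  have hDpos : 0 < D := by
    rw [hD, aux_double_integral σ ψ hσ hψ hψper]
    apply mul_pos
    · exact intervalIntegral.intervalIntegral_pos_of_pos
        ((by fun_prop : Continuous fun x => Real.exp (σ⁻¹ * ψ x)).intervalIntegrable 0 1)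
        (fun x => Real.exp_pos _) one_pos
    · exact intervalIntegral.intervalIntegral_pos_of_pos
        ((by fun_prop : Continuous fun x => Real.exp (σ⁻¹ * -ψ x)).intervalIntegrable 0 1)
        (fun x => Real.exp_pos _) one_pos
  -- the ratio identity
  have hR : ∀ V : ℝ, V ≠ 0 →
      (Real.exp (V / σ) - 1) / Icur V = Real.exp (V / σ) * Hp V + Hm V := by
    intro V hV
    have hee : Real.exp (V / σ) * Real.exp (-V / σ) = 1 := by
      rw [← Real.exp_add, show V / σ + -V / σ = 0 by ring, Real.exp_zero]
    have hne : 1 - Real.exp (-V / σ) ≠ 0 := by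
      intro h
      have h2 : Real.exp (-V / σ) = 1 := by linarith
      rw [Real.exp_eq_one_iff] at h2
      rcases div_eq_zero_iff.1 h2 with h' | h'
      · exact hV (neg_eq_zero.1 h')
      · exact hσ0 h'
    have hnum : Real.exp (V / σ) - 1 = Real.exp (V / σ) * (1 - Real.exp (-V / σ)) := by
      rw [mul_sub, mul_one, hee]
    rw [hI V hV, div_div_eq_mul_div, hnum]
    set c := Hp V + Real.exp (-V / σ) * Hm V with hc
    rw [show Real.exp (V / σ) * (1 - Real.exp (-V / σ)) * c
        = (Real.exp (V / σ) * c) * (1 - Real.exp (-V / σ)) by ring,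
      mul_div_cancel_right₀ _ hne, hc]
    calc Real.exp (V / σ) * (Hp V + Real.exp (-V / σ) * Hm V)
        = Real.exp (V / σ) * Hp V + (Real.exp (V / σ) * Real.exp (-V / σ)) * Hm V := by ring
      _ = Real.exp (V / σ) * Hp V + Hm V := by rw [hee, one_mul]
  -- the function R tends to D
  have hRt : Tendsto (fun V => Real.exp (V / σ) * Hp V + Hm V) (𝓝 0) (𝓝 D) := by
    have : Continuous (fun V => Real.exp (V / σ) * Hp V + Hm V) := by
      apply Continuous.add
      · exact (Real.continuous_exp.comp (continuous_id.div_const σ)).mul hHpc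
      · exact hHmc
    have h := this.tendsto 0
    simpa [hzero] using h
  constructor
  · refine Tendsto.congr' ?_ (hRt.mono_left nhdsWithin_le_nhds)
    filter_upwards [self_mem_nhdsWithin] with V hV
    exact (hR V hV).symm
  · -- derivative
    rw [hasDerivAt_iff_tendsto_slope]
    have hIcur : ∀ V : ℝ, V ≠ 0 →
        Icur V = (Real.exp (V / σ) - 1) / (Real.exp (V / σ) * Hp V + Hm V) := by
      intro V hV
      have hee : Real.exp (V / σ) * Real.exp (-V / σ) = 1 := by
        rw [← Real.exp_add, show V / σ + -V / σ = 0 by ring, Real.exp_zero]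
      have hnum : Real.exp (V / σ) - 1 ≠ 0 := by
        intro h
        have h2 : Real.exp (V / σ) = 1 := by linarith
        rw [Real.exp_eq_one_iff] at h2
        rcases div_eq_zero_iff.1 h2 with h' | h'
        · exact hV h'
        · exact hσ0 h'
      by_cases hR0 : Real.exp (V / σ) * Hp V + Hm V = 0
      · have h1 := hR V hV
        rw [hR0] at h1
        rw [hR0, div_zero]
        rcases div_eq_zero_iff.1 h1 with h | h
        · exact absurd h hnum
        · exact h
      · have hc : Real.exp (V / σ) * Hp V + Hm V
            = Real.exp (V / σ) * (Hp V + Real.exp (-V / σ) * Hm V) := by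
          rw [mul_add, ← mul_assoc, hee, one_mul]
        have hnum' : Real.exp (V / σ) - 1
            = Real.exp (V / σ) * (1 - Real.exp (-V / σ)) := by
          rw [mul_sub, mul_one, hee]
        rw [hI V hV, hc, hnum', mul_div_mul_left _ _ (Real.exp_ne_zero _)]
    -- slope = ((exp(V/σ)-1)/V) * R(V)⁻¹
    have hslope_exp : Tendsto (fun V : ℝ => (Real.exp (V / σ) - 1) / V) (𝓝[≠] 0)
        (𝓝 σ⁻¹) := by
      have hde : HasDerivAt (fun V : ℝ => Real.exp (V / σ)) σ⁻¹ 0 := by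
        have h1 : HasDerivAt (fun V : ℝ => V / σ) (1 / σ) 0 := (hasDerivAt_id 0).div_const σ
        have h2 := (Real.hasDerivAt_exp (0 / σ)).comp 0 h1
        simp only [zero_div, Real.exp_zero, one_mul, one_div] at h2
        exact h2
      have h3 := hasDerivAt_iff_tendsto_slope.1 hde
      exact h3.congr (fun V => by simp [slope_def_field])
    have hRinv : Tendsto (fun V : ℝ => (Real.exp (V / σ) * Hp V + Hm V)⁻¹) (𝓝[≠] 0)
        (𝓝 D⁻¹) :=
      ((hRt.mono_left nhdsWithin_le_nhds).inv₀ (ne_of_gt hDpos))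
    have hprod := hslope_exp.mul hRinv
    have hval : σ⁻¹ * D⁻¹ = 1 / (σ * D) := by
      rw [one_div, mul_inv]
    rw [hval] at hprod
    refine Tendsto.congr' ?_ hprod
    filter_upwards [self_mem_nhdsWithin] with V hV
    rw [slope_def_field, hI0, sub_zero, sub_zero, hIcur V hV]
    simp only [div_eq_mul_inv, mul_inv]
    ring
end

section
/- Let ψ₁, ψ₂ : ℝ → ℝ be continuous, 1-periodic, and anti-symmetric (ψᵢ(−x) = −ψᵢ(x) and ψᵢ(x+1) = ψᵢ(x) for all x). Suppose that for every σ > 0, ∫_{−1}^0 ∫₀¹ exp(σ⁻¹(ψ₁(x) − ψ₁(x+z))) dx dz = ∫_{−1}^0 ∫₀¹ exp(σ⁻¹(ψ₂(x) − ψ₂(x+z))) dx dz. Then ψ₁ and ψ₂ have the same distribution: the pushforward under ψ₁ of Lebesgue measure restricted to [0,1] equals the pushforward under ψ₂ of Lebesgue measure restricted to [0,1]. -/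
open MeasureTheory intervalIntegral Real

/-- A continuous 1-periodic function is globally bounded. -/
lemma periodic_global_bound (ψ : ℝ → ℝ) (hψ : Continuous ψ)
    (hper : ∀ x, ψ (x + 1) = ψ x) : ∃ M : ℝ, ∀ x, |ψ x| ≤ M := by
  obtain ⟨C, hC⟩ := (isCompact_Icc : IsCompact (Set.Icc (0:ℝ) 1)).exists_bound_of_continuousOn
    hψ.continuousOn
  refine ⟨C, fun x => ?_⟩
  have hp : Function.Periodic ψ 1 := hper
  have h1 : ψ (Int.fract x) = ψ x := by
    have h0 := hp.sub_int_mul_eq (x := x) (n := ⌊x⌋)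
    rw [mul_one] at h0
    rw [← Int.self_sub_floor]
    exact h0
  have h2 : Int.fract x ∈ Set.Icc (0:ℝ) 1 :=
    ⟨Int.fract_nonneg x, (Int.fract_lt_one x).le⟩
  simpa [h1] using hC _ h2

/-- The key identity: the double integral factors as a square. -/
lemma double_integral_eq_sq (ψ : ℝ → ℝ) (hψ : Continuous ψ)
    (hper : ∀ x, ψ (x + 1) = ψ x) (hodd : ∀ x, ψ (-x) = -ψ x) (t : ℝ) :
    (∫ z in (-1:ℝ)..0, ∫ x in (0:ℝ)..1, Real.exp (t * (ψ x - ψ (x + z)))) =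
      (∫ x in (0:ℝ)..1, Real.exp (t * ψ x)) ^ 2 := by
  obtain ⟨M, hM⟩ := periodic_global_bound ψ hψ hper
  have hMnn : 0 ≤ M := (abs_nonneg _).trans (hM 0)
  -- rewrite the integrand as a product
  have hrw : ∀ z x : ℝ, Real.exp (t * (ψ x - ψ (x + z))) =
      Real.exp (t * ψ x) * Real.exp (-(t * ψ (x + z))) := by
    intro z x
    rw [← Real.exp_add]; ring_nf
  -- finiteness instances
  haveI h1 : IsFiniteMeasure (volume.restrict (Set.Ioc (-1:ℝ) 0)) :=
    ⟨by simp [Real.volume_Ioc]⟩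
  haveI h2 : IsFiniteMeasure (volume.restrict (Set.Ioc (0:ℝ) 1)) :=
    ⟨by simp [Real.volume_Ioc]⟩
  -- Fubini
  have hcont : Continuous (Function.uncurry fun z x : ℝ =>
      Real.exp (t * ψ x) * Real.exp (-(t * ψ (x + z)))) := by
    apply Continuous.mul
    · exact Real.continuous_exp.comp ((continuous_const.mul (hψ.comp continuous_snd)))
    · exact Real.continuous_exp.comp
        ((continuous_const.mul (hψ.comp (continuous_snd.add continuous_fst))).neg)
  have hint : Integrable (Function.uncurry fun z x : ℝ =>
      Real.exp (t * ψ x) * Real.exp (-(t * ψ (x + z))))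
      ((volume.restrict (Set.Ioc (-1:ℝ) 0)).prod (volume.restrict (Set.Ioc (0:ℝ) 1))) := by
    refine (integrable_const (Real.exp (|t| * M) * Real.exp (|t| * M))).mono'
      hcont.aestronglyMeasurable ?_
    filter_upwards with p
    have key : ∀ y : ℝ, Real.exp (t * ψ y) ≤ Real.exp (|t| * M) := by
      intro y
      apply Real.exp_le_exp.mpr
      calc t * ψ y ≤ |t * ψ y| := le_abs_self _
        _ = |t| * |ψ y| := abs_mul _ _
        _ ≤ |t| * M := by gcongr; exact hM y
    have key' : ∀ y : ℝ, Real.exp (-(t * ψ y)) ≤ Real.exp (|t| * M) := by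
      intro y
      apply Real.exp_le_exp.mpr
      calc -(t * ψ y) ≤ |t * ψ y| := neg_le_abs _
        _ = |t| * |ψ y| := abs_mul _ _
        _ ≤ |t| * M := by gcongr; exact hM y
    have := mul_le_mul (key p.2) (key' (p.2 + p.1)) (Real.exp_pos _).le (Real.exp_pos _).le
    simpa [Function.uncurry, abs_of_pos, Real.exp_pos, abs_mul,
      abs_of_nonneg (Real.exp_pos _).le] using this
  -- compute the inner z-integral
  have hper' : Function.Periodic (fun u => Real.exp (-(t * ψ u))) 1 := by
    intro u; simp [hper u]
  have hinner : ∀ x : ℝ, (∫ z in (-1:ℝ)..0, Real.exp (-(t * ψ (x + z)))) =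
      ∫ u in (0:ℝ)..1, Real.exp (-(t * ψ u)) := by
    intro x
    rw [intervalIntegral.integral_comp_add_left (fun u => Real.exp (-(t * ψ u))) x]
    have := hper'.intervalIntegral_add_eq (x + -1) 0
    simpa using this
  -- the negative-exponent integral equals the positive one, by antisymmetry
  have hC : (∫ u in (0:ℝ)..1, Real.exp (-(t * ψ u))) =
      ∫ x in (0:ℝ)..1, Real.exp (t * ψ x) := by
    have hpt : ∀ u : ℝ, Real.exp (-(t * ψ u)) =
        (fun v => Real.exp (t * ψ v)) (1 - u) := by
      intro u
      have h3 : ψ (1 - u) = -ψ u := by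
        have h4 : ψ (u - 1) = ψ u := by
          have := hper (u - 1); simp at this; linarith [this]
        have : ψ (-(u - 1)) = -ψ (u - 1) := hodd _
        rw [h4] at this
        simpa [neg_sub] using this
      simp [h3]
    calc (∫ u in (0:ℝ)..1, Real.exp (-(t * ψ u)))
        = ∫ u in (0:ℝ)..1, (fun v => Real.exp (t * ψ v)) (1 - u) := by
          simp_rw [hpt]
      _ = ∫ v in (1-(1:ℝ))..(1-0), Real.exp (t * ψ v) :=
          intervalIntegral.integral_comp_sub_left (fun v => Real.exp (t * ψ v)) 1
      _ = ∫ x in (0:ℝ)..1, Real.exp (t * ψ x) := by norm_num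
  calc (∫ z in (-1:ℝ)..0, ∫ x in (0:ℝ)..1, Real.exp (t * (ψ x - ψ (x + z))))
      = ∫ z in (-1:ℝ)..0, ∫ x in (0:ℝ)..1,
          Real.exp (t * ψ x) * Real.exp (-(t * ψ (x + z))) := by
        simp_rw [hrw]
    _ = ∫ z in Set.Ioc (-1:ℝ) 0, ∫ x in Set.Ioc (0:ℝ) 1,
          Real.exp (t * ψ x) * Real.exp (-(t * ψ (x + z))) := by
        rw [intervalIntegral.integral_of_le (by norm_num : (-1:ℝ) ≤ 0)]
        congr 1; ext z
        rw [intervalIntegral.integral_of_le (by norm_num : (0:ℝ) ≤ 1)]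
    _ = ∫ x in Set.Ioc (0:ℝ) 1, ∫ z in Set.Ioc (-1:ℝ) 0,
          Real.exp (t * ψ x) * Real.exp (-(t * ψ (x + z))) :=
        integral_integral_swap hint
    _ = ∫ x in Set.Ioc (0:ℝ) 1,
          Real.exp (t * ψ x) * ∫ z in Set.Ioc (-1:ℝ) 0, Real.exp (-(t * ψ (x + z))) := by
        congr 1; ext x
        exact integral_const_mul _ _
    _ = ∫ x in Set.Ioc (0:ℝ) 1,
          Real.exp (t * ψ x) * ∫ u in (0:ℝ)..1, Real.exp (-(t * ψ u)) := by
        congr 1; ext x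
        congr 1
        rw [← intervalIntegral.integral_of_le (by norm_num : (-1:ℝ) ≤ 0)]
        exact hinner x
    _ = (∫ x in Set.Ioc (0:ℝ) 1, Real.exp (t * ψ x)) *
          ∫ u in (0:ℝ)..1, Real.exp (-(t * ψ u)) :=
        integral_mul_const _ _
    _ = (∫ x in (0:ℝ)..1, Real.exp (t * ψ x)) ^ 2 := by
        rw [hC, ← intervalIntegral.integral_of_le (by norm_num : (0:ℝ) ≤ 1)]
        ring

/-- Proposition 2: if two continuous, 1-periodic, anti-symmetric potentials
give the same resistance functional for all temperatures `σ > 0`, then they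
have the same distribution on `[0,1]` (equal pushforwards of Lebesgue measure
restricted to `[0,1]`). -/
theorem stmt16 (ψ₁ ψ₂ : ℝ → ℝ)
    (hψ₁ : Continuous ψ₁) (hψ₂ : Continuous ψ₂)
    (hper₁ : ∀ x, ψ₁ (x + 1) = ψ₁ x) (hper₂ : ∀ x, ψ₂ (x + 1) = ψ₂ x)
    (hodd₁ : ∀ x, ψ₁ (-x) = -ψ₁ x) (hodd₂ : ∀ x, ψ₂ (-x) = -ψ₂ x)
    (heq : ∀ σ : ℝ, 0 < σ →
      (∫ z in (-1:ℝ)..0, ∫ x in (0:ℝ)..1,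
        Real.exp (σ⁻¹ * (ψ₁ x - ψ₁ (x + z)))) =
      ∫ z in (-1:ℝ)..0, ∫ x in (0:ℝ)..1,
        Real.exp (σ⁻¹ * (ψ₂ x - ψ₂ (x + z)))) :
    Measure.map ψ₁ (volume.restrict (Set.Icc (0:ℝ) 1)) =
      Measure.map ψ₂ (volume.restrict (Set.Icc (0:ℝ) 1)) := by
  -- Step 1: equality of Laplace transforms for positive t
  have hL : ∀ t : ℝ, 0 < t →
      (∫ x in (0:ℝ)..1, Real.exp (t * ψ₁ x)) =
        ∫ x in (0:ℝ)..1, Real.exp (t * ψ₂ x) := by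
    intro t ht
    have h := heq t⁻¹ (inv_pos.mpr ht)
    rw [inv_inv] at h
    rw [double_integral_eq_sq ψ₁ hψ₁ hper₁ hodd₁ t,
        double_integral_eq_sq ψ₂ hψ₂ hper₂ hodd₂ t] at h
    have hp1 : 0 < ∫ x in (0:ℝ)..1, Real.exp (t * ψ₁ x) :=
      intervalIntegral.intervalIntegral_pos_of_pos
        ((Real.continuous_exp.comp (continuous_const.mul hψ₁)).intervalIntegrable 0 1)
        (fun x => Real.exp_pos _) one_pos
    have hp2 : 0 < ∫ x in (0:ℝ)..1, Real.exp (t * ψ₂ x) :=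
      intervalIntegral.intervalIntegral_pos_of_pos
        ((Real.continuous_exp.comp (continuous_const.mul hψ₂)).intervalIntegrable 0 1)
        (fun x => Real.exp_pos _) one_pos
    nlinarith [sq_nonneg ((∫ x in (0:ℝ)..1, Real.exp (t * ψ₁ x)) -
      ∫ x in (0:ℝ)..1, Real.exp (t * ψ₂ x))]
  -- Step 2: equality of moments of exp over Icc, for all natural exponents
  have hbase : ∀ n : ℕ,
      (∫ x in Set.Icc (0:ℝ) 1, Real.exp ((n:ℝ) * ψ₁ x)) =
        ∫ x in Set.Icc (0:ℝ) 1, Real.exp ((n:ℝ) * ψ₂ x) := by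
    intro n
    rcases Nat.eq_zero_or_pos n with hn | hn
    · simp [hn]
    · have := hL n (by exact_mod_cast hn)
      rw [intervalIntegral.integral_of_le (by norm_num : (0:ℝ) ≤ 1),
          intervalIntegral.integral_of_le (by norm_num : (0:ℝ) ≤ 1)] at this
      rwa [MeasureTheory.integral_Icc_eq_integral_Ioc,
        MeasureTheory.integral_Icc_eq_integral_Ioc]
  -- global bounds
  obtain ⟨M₁, hM₁⟩ := periodic_global_bound ψ₁ hψ₁ hper₁
  obtain ⟨M₂, hM₂⟩ := periodic_global_bound ψ₂ hψ₂ hper₂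
  set M : ℝ := max M₁ M₂ with hMdef
  have hb₁ : ∀ x, ψ₁ x ∈ Set.Icc (-M) M := by
    intro x
    have := (hM₁ x).trans (le_max_left M₁ M₂)
    exact abs_le.mp this
  have hb₂ : ∀ x, ψ₂ x ∈ Set.Icc (-M) M := by
    intro x
    have := (hM₂ x).trans (le_max_right M₁ M₂)
    exact abs_le.mp this
  set K : Set ℝ := Set.Icc (-M) M with hKdef
  haveI : CompactSpace K := isCompact_iff_compactSpace.mp isCompact_Icc
  set Ψ₁ : ℝ → K := fun x => ⟨ψ₁ x, hb₁ x⟩ with hΨ₁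
  set Ψ₂ : ℝ → K := fun x => ⟨ψ₂ x, hb₂ x⟩ with hΨ₂
  have hΨ₁c : Continuous Ψ₁ := hψ₁.subtype_mk _
  have hΨ₂c : Continuous Ψ₂ := hψ₂.subtype_mk _
  set e : C(K, ℝ) := ⟨fun y => Real.exp (y : ℝ),
    Real.continuous_exp.comp continuous_subtype_val⟩ with hedef
  set A : Subalgebra ℝ C(K, ℝ) := Algebra.adjoin ℝ {e} with hAdef
  -- all elements of A integrate equally
  have hAint : ∀ g ∈ A,
      (∫ x in Set.Icc (0:ℝ) 1, g (Ψ₁ x)) = ∫ x in Set.Icc (0:ℝ) 1, g (Ψ₂ x) := by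
    intro g hg
    rw [hAdef, Algebra.adjoin_singleton_eq_range_aeval] at hg
    obtain ⟨p, rfl⟩ := hg
    have hev : ∀ y : K, (Polynomial.aeval e p) y =
        ∑ i ∈ Finset.range (p.natDegree + 1),
          p.coeff i * Real.exp ((i : ℝ) * (y : ℝ)) := by
      intro y
      rw [Polynomial.aeval_continuousMap_apply,
        Polynomial.eval_eq_sum_range]
      congr 1; ext i
      rw [Real.exp_nat_mul]
      rfl
    have hint : ∀ (ψ : ℝ → ℝ), Continuous ψ → ∀ i : ℕ,
        IntegrableOn (fun x => p.coeff i * Real.exp ((i:ℝ) * ψ x))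
          (Set.Icc (0:ℝ) 1) volume := by
      intro ψ hψ i
      exact (continuous_const.mul
        (Real.continuous_exp.comp (continuous_const.mul hψ))).integrableOn_Icc
    have hsum : ∀ (ψ : ℝ → ℝ), Continuous ψ → ∀ (Ψ : ℝ → K),
        (∀ x, (Ψ x : ℝ) = ψ x) →
        (∫ x in Set.Icc (0:ℝ) 1, (Polynomial.aeval e p) (Ψ x)) =
          ∑ i ∈ Finset.range (p.natDegree + 1),
            p.coeff i * ∫ x in Set.Icc (0:ℝ) 1, Real.exp ((i:ℝ) * ψ x) := by
      intro ψ hψ Ψ hΨ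
      calc (∫ x in Set.Icc (0:ℝ) 1, (Polynomial.aeval e p) (Ψ x))
          = ∫ x in Set.Icc (0:ℝ) 1, ∑ i ∈ Finset.range (p.natDegree + 1),
              p.coeff i * Real.exp ((i:ℝ) * ψ x) := by
            apply MeasureTheory.integral_congr_ae
            filter_upwards with x
            rw [hev (Ψ x), hΨ x]
        _ = ∑ i ∈ Finset.range (p.natDegree + 1),
              ∫ x in Set.Icc (0:ℝ) 1, p.coeff i * Real.exp ((i:ℝ) * ψ x) :=
            MeasureTheory.integral_finset_sum _ (fun i _ => hint ψ hψ i)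
        _ = ∑ i ∈ Finset.range (p.natDegree + 1),
              p.coeff i * ∫ x in Set.Icc (0:ℝ) 1, Real.exp ((i:ℝ) * ψ x) := by
            refine Finset.sum_congr rfl fun i _ => MeasureTheory.integral_const_mul _ _
    show (∫ x in Set.Icc (0:ℝ) 1, (Polynomial.aeval e) p (Ψ₁ x)) =
      ∫ x in Set.Icc (0:ℝ) 1, (Polynomial.aeval e) p (Ψ₂ x)
    rw [hsum ψ₁ hψ₁ Ψ₁ (fun x => rfl), hsum ψ₂ hψ₂ Ψ₂ (fun x => rfl)]
    exact Finset.sum_congr rfl fun i _ => by rw [hbase i]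
  -- A separates points
  have hsep : A.SeparatesPoints := by
    intro y z hyz
    refine ⟨e, ⟨e, Algebra.subset_adjoin rfl, rfl⟩, ?_⟩
    simp only [hedef, ContinuousMap.coe_mk]
    intro h
    exact hyz (Subtype.ext (Real.exp_injective h))
  -- conclusion: equal integrals of all continuous functions
  have hmain : ∀ F : ℝ → ℝ, Continuous F →
      (∫ x in Set.Icc (0:ℝ) 1, F (ψ₁ x)) = ∫ x in Set.Icc (0:ℝ) 1, F (ψ₂ x) := by
    intro F hF
    set fK : C(K, ℝ) := ⟨fun y => F (y : ℝ), hF.comp continuous_subtype_val⟩ with hfK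
    have habs : ∀ ε : ℝ, 0 < ε →
        |(∫ x in Set.Icc (0:ℝ) 1, F (ψ₁ x)) - ∫ x in Set.Icc (0:ℝ) 1, F (ψ₂ x)| ≤ ε := by
      intro ε hε
      obtain ⟨g, hg⟩ := ContinuousMap.exists_mem_subalgebra_near_continuousMap_of_separatesPoints
        A hsep fK (ε/2) (by linarith)
      have hvol : ((volume.restrict (Set.Icc (0:ℝ) 1)) Set.univ).toReal = 1 := by
        simp [Real.volume_Icc]
      haveI : IsFiniteMeasure (volume.restrict (Set.Icc (0:ℝ) 1)) :=
        ⟨by simp [Real.volume_Icc]⟩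
      have hest : ∀ (ψ : ℝ → ℝ) (hψ : Continuous ψ) (Ψ : ℝ → K)
          (hΨ : ∀ x, (Ψ x : ℝ) = ψ x) (hΨc : Continuous Ψ),
          |(∫ x in Set.Icc (0:ℝ) 1, F (ψ x)) -
            ∫ x in Set.Icc (0:ℝ) 1, (g : C(K,ℝ)) (Ψ x)| ≤ ε/2 := by
        intro ψ hψ Ψ hΨ hΨc
        have i1 : IntegrableOn (fun x => F (ψ x)) (Set.Icc (0:ℝ) 1) volume :=
          (hF.comp hψ).integrableOn_Icc
        have i2 : IntegrableOn (fun x => (g : C(K,ℝ)) (Ψ x)) (Set.Icc (0:ℝ) 1) volume :=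
          ((g : C(K,ℝ)).continuous.comp hΨc).integrableOn_Icc
        rw [← MeasureTheory.integral_sub i1 i2]
        have := MeasureTheory.norm_integral_le_of_norm_le_const
          (μ := volume.restrict (Set.Icc (0:ℝ) 1))
          (f := fun x => F (ψ x) - (g : C(K,ℝ)) (Ψ x)) (C := ε/2) ?_
        · rw [show (volume.restrict (Set.Icc (0:ℝ) 1)).real Set.univ = 1 from hvol] at this
          simpa [Real.norm_eq_abs] using this
        · filter_upwards with x
          have h1 : F (ψ x) = fK (Ψ x) := by
            simp only [hfK, ContinuousMap.coe_mk, hΨ x]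
          rw [Real.norm_eq_abs, h1]
          have h2 : |fK (Ψ x) - (g : C(K,ℝ)) (Ψ x)| = |((g : C(K,ℝ)) - fK) (Ψ x)| := by
            simp [abs_sub_comm]
          rw [h2]
          calc |((g : C(K,ℝ)) - fK) (Ψ x)| ≤ ‖(g : C(K,ℝ)) - fK‖ := by
                simpa [Real.norm_eq_abs] using
                  ContinuousMap.norm_coe_le_norm ((g : C(K,ℝ)) - fK) (Ψ x)
            _ ≤ ε/2 := hg.le
      have e1 := hest ψ₁ hψ₁ Ψ₁ (fun x => rfl) hΨ₁c
      have e2 := hest ψ₂ hψ₂ Ψ₂ (fun x => rfl) hΨ₂c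
      have e3 := hAint (g : C(K,ℝ)) g.2
      calc |(∫ x in Set.Icc (0:ℝ) 1, F (ψ₁ x)) - ∫ x in Set.Icc (0:ℝ) 1, F (ψ₂ x)|
          ≤ |(∫ x in Set.Icc (0:ℝ) 1, F (ψ₁ x)) -
              ∫ x in Set.Icc (0:ℝ) 1, (g : C(K,ℝ)) (Ψ₁ x)| +
            |(∫ x in Set.Icc (0:ℝ) 1, (g : C(K,ℝ)) (Ψ₂ x)) -
              ∫ x in Set.Icc (0:ℝ) 1, F (ψ₂ x)| := by
            rw [e3]
            exact abs_sub_le _ _ _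
        _ ≤ ε/2 + ε/2 := add_le_add e1 (by rw [abs_sub_comm]; exact e2)
        _ = ε := by ring
    by_contra hne
    have hd : 0 < |(∫ x in Set.Icc (0:ℝ) 1, F (ψ₁ x)) -
        ∫ x in Set.Icc (0:ℝ) 1, F (ψ₂ x)| := abs_pos.mpr (sub_ne_zero.mpr hne)
    have := habs (|(∫ x in Set.Icc (0:ℝ) 1, F (ψ₁ x)) -
        ∫ x in Set.Icc (0:ℝ) 1, F (ψ₂ x)| / 2) (by linarith)
    linarith
  -- finish via extensionality for finite measures
  haveI hfin1 : IsFiniteMeasure (Measure.map ψ₁ (volume.restrict (Set.Icc (0:ℝ) 1))) := by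
    constructor
    rw [Measure.map_apply hψ₁.measurable MeasurableSet.univ]
    simp [Real.volume_Icc]
  apply MeasureTheory.ext_of_forall_lintegral_eq_of_IsFiniteMeasure
  intro f
  have hfm : Measurable fun y : ℝ => ((f y : NNReal) : ENNReal) :=
    measurable_coe_nnreal_ennreal.comp f.continuous.measurable
  rw [MeasureTheory.lintegral_map hfm hψ₁.measurable,
      MeasureTheory.lintegral_map hfm hψ₂.measurable]
  have hi : ∀ (ψ : ℝ → ℝ), Continuous ψ →
      Integrable (fun x => ((f (ψ x) : NNReal) : ℝ))
        (volume.restrict (Set.Icc (0:ℝ) 1)) := by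
    intro ψ hψ
    exact (NNReal.continuous_coe.comp (f.continuous.comp hψ)).integrableOn_Icc
  rw [MeasureTheory.lintegral_coe_eq_integral _ (hi ψ₁ hψ₁),
      MeasureTheory.lintegral_coe_eq_integral _ (hi ψ₂ hψ₂),
      hmain (fun y => ((f y : NNReal) : ℝ)) (NNReal.continuous_coe.comp f.continuous)]
end

section
/- Let ρ : ℝ → ℝ be continuous, strictly positive, and 1-periodic with ∫₀¹ ρ(z) dz = 1, let I ∈ ℝ, and let z : [0, ∞) → ℝ be a differentiable function satisfying z'(t) = −I/ρ(z(t)) for all t ≥ 0. Then lim_{t → ∞} z(t)/t = −I. -/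
open MeasureTheory intervalIntegral Filter Topology

/-- A particle moving with velocity `z' = -I/ρ(z)`, where `ρ` is a continuous,
strictly positive, 1-periodic density with `∫₀¹ ρ = 1`, has mean velocity
`lim_{t→∞} z(t)/t = -I`. -/
theorem stmt17 (ρ : ℝ → ℝ) (hρc : Continuous ρ) (hρpos : ∀ x, 0 < ρ x)
    (hρper : ∀ x, ρ (x + 1) = ρ x)
    (hnorm : (∫ x in (0:ℝ)..1, ρ x) = 1)
    (I : ℝ) (z : ℝ → ℝ)
    (hz : ∀ t : ℝ, 0 ≤ t →
      HasDerivWithinAt z (-I / ρ (z t)) (Set.Ici (0:ℝ)) t) :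
    Tendsto (fun t => z t / t) atTop (𝓝 (-I)) := by
  have hper : Function.Periodic ρ 1 := hρper
  set F : ℝ → ℝ := fun x => ∫ s in (0:ℝ)..x, ρ s with hFdef
  have hFderiv : ∀ x, HasDerivAt F (ρ x) x := fun x =>
    intervalIntegral.integral_hasDerivAt_right (hρc.intervalIntegrable _ _)
      hρc.aestronglyMeasurable.stronglyMeasurableAtFilter hρc.continuousAt
  have hFcont : Continuous F := by
    apply continuous_iff_continuousAt.2 fun x => (hFderiv x).continuousAt
  -- F (x+1) = F x + 1
  have hFadd : ∀ x, F (x + 1) = F x + 1 := by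
    intro x
    have h1 : (∫ s in x..(x+1), ρ s) = ∫ s in (0:ℝ)..(0+1), ρ s :=
      hper.intervalIntegral_add_eq x 0
    have h2 : F (x + 1) = F x + ∫ s in x..(x+1), ρ s := by
      rw [hFdef]
      exact (intervalIntegral.integral_add_adjacent_intervals
        (hρc.intervalIntegrable _ _) (hρc.intervalIntegrable _ _)).symm
    rw [h2, h1]
    simp [hnorm]
  -- δ = F - id is 1-periodic
  set δ : ℝ → ℝ := fun x => F x - x with hδdef
  have hδper : Function.Periodic δ 1 := by
    intro x
    simp only [hδdef, hFadd x]
    ring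
  have hδcont : Continuous δ := hFcont.sub continuous_id
  obtain ⟨C, hC⟩ := (isCompact_Icc (a := (0:ℝ)) (b := 1)).exists_bound_of_continuousOn
    hδcont.continuousOn
  have hCbound : ∀ x, |δ x| ≤ C := by
    intro x
    have h1 : δ (Int.fract x) = δ x := by
      have h0 := hδper.sub_int_mul_eq (x := x) ⌊x⌋
      rw [mul_one, Int.self_sub_floor] at h0
      exact h0
    rw [← h1]
    exact hC _ ⟨Int.fract_nonneg x, (Int.fract_lt_one x).le⟩
  -- h t = F (z t) + I * t is constant on [0, ∞)
  have key : ∀ t : ℝ, 0 ≤ t → F (z t) + I * t = F (z 0) := by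
    intro b hb
    set h : ℝ → ℝ := fun t => F (z t) + I * t with hhdef
    have hd : ∀ t : ℝ, 0 ≤ t → HasDerivWithinAt h 0 (Set.Ici (0:ℝ)) t := by
      intro t ht
      have h1 : HasDerivWithinAt (fun t => F (z t)) (ρ (z t) * (-I / ρ (z t)))
          (Set.Ici (0:ℝ)) t := (hFderiv (z t)).comp_hasDerivWithinAt t (hz t ht)
      have h2 : HasDerivWithinAt h (ρ (z t) * (-I / ρ (z t)) + I * 1)
          (Set.Ici (0:ℝ)) t := h1.add (((hasDerivAt_id t).const_mul I).hasDerivWithinAt)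
      have h3 : ρ (z t) * (-I / ρ (z t)) + I * 1 = 0 := by
        field_simp [(hρpos (z t)).ne']
        ring
      rwa [h3] at h2
    have hcont : ContinuousOn h (Set.Icc 0 b) := by
      intro x hx
      exact ((hd x hx.1).continuousWithinAt).mono (fun y hy => hy.1)
    have := constant_of_has_deriv_right_zero hcont
      (fun x hx => (hd x hx.1).mono (Set.Ici_subset_Ici.2 hx.1)) b
      (Set.mem_Icc.2 ⟨hb, le_refl b⟩)
    simpa [hhdef] using this
  -- conclusion
  have hzz : ∀ t : ℝ, 0 ≤ t → z t = F (z 0) - I * t - δ (z t) := by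
    intro t ht
    have := key t ht
    simp only [hδdef]
    linarith
  have hlim0 : Tendsto (fun t : ℝ => z t / t + I) atTop (𝓝 0) := by
    apply squeeze_zero_norm' (a := fun t : ℝ => (|F (z 0)| + C) / t)
    · filter_upwards [eventually_ge_atTop (1:ℝ)] with t ht
      have ht0 : (0:ℝ) < t := lt_of_lt_of_le one_pos ht
      obtain ⟨a, ha, hzt⟩ : ∃ a, |a| ≤ C ∧ z t = F (z 0) - I * t - a :=
        ⟨δ (z t), hCbound _, hzz t ht0.le⟩
      have heq : z t / t + I = (F (z 0) - a) / t := by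
        rw [hzt]; field_simp; ring
      rw [Real.norm_eq_abs, heq, abs_div, abs_of_pos ht0]
      have hnum : |F (z 0) - a| ≤ |F (z 0)| + C := by
        calc |F (z 0) - a| ≤ |F (z 0)| + |a| := abs_sub _ _
          _ ≤ |F (z 0)| + C := by linarith
      gcongr
    · exact tendsto_const_nhds.div_atTop tendsto_id
  have := hlim0.sub_const I
  simpa using this
end
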